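/- arXiv:1512.04403 — 2 statements merged into one kernel-verified Lean document; each statement's English description precedes it below -/
import Mathlib

section
/- Assume condition (PCLI1). Then for every initial distribution p on ℝ with ∫ w dp < ∞, every state x, and every threshold z ∈ ℝ: (a) F(p,z) − F(p,z⁻) = m*(z)·(G(p,z) − G(p,z⁻)); (b) f(x,z) − f(x,z⁻) = m*(z)·(g(x,z) − g(x,z⁻)); (c) g(x,x⁻) > 0 and m(x,x⁻) = m(x,x) = m*(x), i.e., f(x,x⁻) = m*(x)·g(x,x⁻). -/
open MeasureTheory ProbabilityTheory Filter Topology Set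

noncomputable section

/-- A restless bandit project: the model data (discount factor `β`, passive/active
Markov transition kernels `κ false`/`κ true`, reward `r` and resource consumption `c`),
Assumption 1 (the weighted sup-norm conditions for weight `w` and constants `M`, `γ`),
together with the threshold-policy performance metrics `F`, `G` (for `z`-policies,
active iff `x > z`), `Fm`, `Gm` (for `z⁻`-policies, active iff `x ≥ z`), and the
optimal value function `V lam` of the `lam`-price problem, each of which is the
(unique) `w`-bounded measurable solution of its fixed-point equation. -/
structure Bandit where
  β : ℝ
  κ : Bool → Kernel ℝ ℝ
  r : ℝ → Bool → ℝ
  c : ℝ → Bool → ℝ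
  w : ℝ → ℝ
  M : ℝ
  γ : ℝ
  F : ℝ → EReal → ℝ
  G : ℝ → EReal → ℝ
  Fm : ℝ → EReal → ℝ
  Gm : ℝ → EReal → ℝ
  V : ℝ → ℝ → ℝ
  hβ0 : 0 ≤ β
  hβ1 : β < 1
  hκ : ∀ a, IsMarkovKernel (κ a)
  hr_cont : ∀ a, Continuous fun x => r x a
  hc_cont : ∀ a, Continuous fun x => c x a
  hc0 : ∀ x, 0 ≤ c x false
  hc01 : ∀ x, c x false < c x true
  hw_meas : Measurable w
  hw_one : ∀ x, 1 ≤ w x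
  hM : 0 < M
  hβγ : β ≤ γ
  hγ1 : γ < 1
  hr_bd : ∀ x a, |r x a| ≤ M * w x
  hc_bd : ∀ x a, c x a ≤ M * w x
  hw_int : ∀ a x, Integrable w (κ a x)
  hw_drift : ∀ a x, β * ∫ y, w y ∂(κ a x) ≤ γ * w x
  hF_meas : ∀ z, Measurable fun x => F x z
  hG_meas : ∀ z, Measurable fun x => G x z
  hFm_meas : ∀ z, Measurable fun x => Fm x z
  hGm_meas : ∀ z, Measurable fun x => Gm x z
  hV_meas : ∀ lam, Measurable (V lam)
  hF_bdd : ∀ z, ∃ C, ∀ x, |F x z| ≤ C * w x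
  hG_bdd : ∀ z, ∃ C, ∀ x, |G x z| ≤ C * w x
  hFm_bdd : ∀ z, ∃ C, ∀ x, |Fm x z| ≤ C * w x
  hGm_bdd : ∀ z, ∃ C, ∀ x, |Gm x z| ≤ C * w x
  hV_bdd : ∀ lam, ∃ C, ∀ x, |V lam x| ≤ C * w x
  hF_eq : ∀ x z, F x z =
    r x (decide (z < (x : EReal))) +
      β * ∫ y, F y z ∂(κ (decide (z < (x : EReal))) x)
  hG_eq : ∀ x z, G x z =
    c x (decide (z < (x : EReal))) +
      β * ∫ y, G y z ∂(κ (decide (z < (x : EReal))) x)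
  hFm_eq : ∀ x z, Fm x z =
    r x (decide (z ≤ (x : EReal))) +
      β * ∫ y, Fm y z ∂(κ (decide (z ≤ (x : EReal))) x)
  hGm_eq : ∀ x z, Gm x z =
    c x (decide (z ≤ (x : EReal))) +
      β * ∫ y, Gm y z ∂(κ (decide (z ≤ (x : EReal))) x)
  hV_eq : ∀ lam x, V lam x =
    max (r x false - lam * c x false + β * ∫ y, V lam y ∂(κ false x))
        (r x true - lam * c x true + β * ∫ y, V lam y ∂(κ true x))

/-- `ν` is the Lebesgue–Stieltjes measure of the (bounded nonincreasing
right-continuous) function `h`: `ν(z₁,z₂] = h z₁ - h z₂`. -/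
def IsLSMeasureOfAnti (h : ℝ → ℝ) (ν : Measure ℝ) : Prop :=
  ∀ z₁ z₂ : ℝ, z₁ ≤ z₂ → ν (Set.Ioc z₁ z₂) = ENNReal.ofReal (h z₁ - h z₂)

/-- `ν` is the Lebesgue–Stieltjes measure of the (bounded nondecreasing
right-continuous) function `h`: `ν(z₁,z₂] = h z₂ - h z₁`. -/
def IsLSMeasureOfMono (h : ℝ → ℝ) (ν : Measure ℝ) : Prop :=
  ∀ z₁ z₂ : ℝ, z₁ ≤ z₂ → ν (Set.Ioc z₁ z₂) = ENNReal.ofReal (h z₂ - h z₁)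

/-- The real interval `(z₁, z₂] ⊆ ℝ` with extended-real endpoints. -/
def iocR (z₁ z₂ : EReal) : Set ℝ := {y : ℝ | z₁ < (y : EReal) ∧ (y : EReal) ≤ z₂}

/-- `t`-step distribution of the Markov chain with kernel `κ` and initial law `p`. -/
def kerIter (κ : Kernel ℝ ℝ) : ℕ → Measure ℝ → Measure ℝ
  | 0, p => p
  | (t + 1), p => (kerIter κ t p).bind fun x => κ x

namespace Bandit

variable (P : Bandit)

/-- Marginal reward metric `f(x,z)` of the `z`-policy. -/
def f (x : ℝ) (z : EReal) : ℝ :=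
  (P.r x true - P.r x false) +
    P.β * ((∫ y, P.F y z ∂(P.κ true x)) - ∫ y, P.F y z ∂(P.κ false x))

/-- Marginal resource metric `g(x,z)` of the `z`-policy. -/
def g (x : ℝ) (z : EReal) : ℝ :=
  (P.c x true - P.c x false) +
    P.β * ((∫ y, P.G y z ∂(P.κ true x)) - ∫ y, P.G y z ∂(P.κ false x))

/-- Marginal reward metric `f(x,z⁻)` of the `z⁻`-policy. -/
def fm (x : ℝ) (z : EReal) : ℝ :=
  (P.r x true - P.r x false) +
    P.β * ((∫ y, P.Fm y z ∂(P.κ true x)) - ∫ y, P.Fm y z ∂(P.κ false x))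

/-- Marginal resource metric `g(x,z⁻)` of the `z⁻`-policy. -/
def gm (x : ℝ) (z : EReal) : ℝ :=
  (P.c x true - P.c x false) +
    P.β * ((∫ y, P.Gm y z ∂(P.κ true x)) - ∫ y, P.Gm y z ∂(P.κ false x))

/-- Marginal productivity metric `m(x,z) = f(x,z)/g(x,z)`. -/
def m (x : ℝ) (z : EReal) : ℝ := P.f x z / P.g x z

/-- Marginal productivity metric `m(x,z⁻) = f(x,z⁻)/g(x,z⁻)`. -/
def mm (x : ℝ) (z : EReal) : ℝ := P.fm x z / P.gm x z

/-- The marginal productivity (MP) index `m*(x) = m(x,x)`. -/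
def mStar (x : ℝ) : ℝ := P.m x (x : EReal)

/-- The active action is `P_lam`-optimal at `x`. -/
def ActOpt (lam x : ℝ) : Prop :=
  P.r x false - lam * P.c x false + P.β * ∫ y, P.V lam y ∂(P.κ false x) ≤
    P.r x true - lam * P.c x true + P.β * ∫ y, P.V lam y ∂(P.κ true x)

/-- The passive action is `P_lam`-optimal at `x`. -/
def PassOpt (lam x : ℝ) : Prop :=
  P.r x true - lam * P.c x true + P.β * ∫ y, P.V lam y ∂(P.κ true x) ≤
    P.r x false - lam * P.c x false + P.β * ∫ y, P.V lam y ∂(P.κ false x)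

/-- The project is indexable with index `ν`. -/
def Indexable (ν : ℝ → ℝ) : Prop :=
  ∀ lam x, (P.ActOpt lam x ↔ lam ≤ ν x) ∧ (P.PassOpt lam x ↔ ν x ≤ lam)

/-- The `z`-policy is `P_lam`-optimal. -/
def ZPolicyOpt (z : EReal) (lam : ℝ) : Prop :=
  ∀ x, P.F x z - lam * P.G x z = P.V lam x

/-- The `z⁻`-policy is `P_lam`-optimal. -/
def ZmPolicyOpt (z : EReal) (lam : ℝ) : Prop :=
  ∀ x, P.Fm x z - lam * P.Gm x z = P.V lam x

/-- The project is strongly threshold-indexable with index `ν`. -/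
def StronglyThresholdIndexable (ν : ℝ → ℝ) : Prop :=
  P.Indexable ν ∧
    ∀ lam : ℝ, ∃ z : EReal, P.ZPolicyOpt z lam ∧ P.ZmPolicyOpt z lam

/-- PCL-indexability condition (PCLI1). -/
def PCLI1 : Prop := ∀ (x : ℝ) (z : EReal), 0 < P.g x z

/-- PCL-indexability condition (PCLI2). -/
def PCLI2 : Prop :=
  Monotone P.mStar ∧ Continuous P.mStar ∧ BddBelow (Set.range P.mStar)

/-- PCL-indexability condition (PCLI3). -/
def PCLI3 : Prop :=
  ∀ x : ℝ, ∀ ν : Measure ℝ, IsLSMeasureOfAnti (fun z : ℝ => P.G x z) ν →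
    ∀ z₁ z₂ : ℝ, z₁ < z₂ →
      P.F x z₂ - P.F x z₁ = -∫ z in Set.Ioc z₁ z₂, P.mStar z ∂ν

/-- The project is PCL-indexable. -/
def PCLIndexable : Prop := P.PCLI1 ∧ P.PCLI2 ∧ P.PCLI3

/-- Reward metric with initial distribution `p`. -/
def Fp (p : Measure ℝ) (z : EReal) : ℝ := ∫ x, P.F x z ∂p

/-- Resource metric with initial distribution `p`. -/
def Gp (p : Measure ℝ) (z : EReal) : ℝ := ∫ x, P.G x z ∂p

/-- `z⁻`-policy reward metric with initial distribution `p`. -/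
def Fmp (p : Measure ℝ) (z : EReal) : ℝ := ∫ x, P.Fm x z ∂p

/-- `z⁻`-policy resource metric with initial distribution `p`. -/
def Gmp (p : Measure ℝ) (z : EReal) : ℝ := ∫ x, P.Gm x z ∂p

/-- An admissible initial distribution: a probability measure with `∫ w dp < ∞`. -/
def IsInitDist (p : Measure ℝ) : Prop :=
  IsProbabilityMeasure p ∧ Integrable P.w p

/-- The transition kernel of the `z`-policy (active iff `x > z`). -/
def thrKer (z : EReal) : Kernel ℝ ℝ :=
  haveI : DecidablePred (· ∈ {x : ℝ | z < (x : EReal)}) := Classical.decPred _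
  Kernel.piecewise
    (show MeasurableSet {x : ℝ | z < (x : EReal)} from
      measurable_coe_real_ereal measurableSet_Ioi)
    (P.κ true) (P.κ false)

/-- The transition kernel of the `z⁻`-policy (active iff `x ≥ z`). -/
def thrKerM (z : EReal) : Kernel ℝ ℝ :=
  haveI : DecidablePred (· ∈ {x : ℝ | z ≤ (x : EReal)}) := Classical.decPred _
  Kernel.piecewise
    (show MeasurableSet {x : ℝ | z ≤ (x : EReal)} from
      measurable_coe_real_ereal measurableSet_Ici)
    (P.κ true) (P.κ false)

/-- The (discounted) state occupation measure `μ_p^z` of the `z`-policy. -/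
def occ (z : EReal) (p : Measure ℝ) : Measure ℝ :=
  Measure.sum fun t : ℕ => ENNReal.ofReal (P.β ^ t) • kerIter (P.thrKer z) t p

/-- The (discounted) state occupation measure `μ_p^{z⁻}` of the `z⁻`-policy. -/
def occM (z : EReal) (p : Measure ℝ) : Measure ℝ :=
  Measure.sum fun t : ℕ => ENNReal.ofReal (P.β ^ t) • kerIter (P.thrKerM z) t p

end Bandit

/-- Finite-horizon reward metric `F_k(x,z)` (value iteration). -/
def Bandit.Fk (P : Bandit) : ℕ → ℝ → EReal → ℝ
  | 0, x, z => P.r x (decide (z < (x : EReal)))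
  | (k + 1), x, z =>
      P.r x (decide (z < (x : EReal))) +
        P.β * ∫ y, Bandit.Fk P k y z ∂(P.κ (decide (z < (x : EReal))) x)

/-- Finite-horizon resource metric `G_k(x,z)` (value iteration). -/
def Bandit.Gk (P : Bandit) : ℕ → ℝ → EReal → ℝ
  | 0, x, z => P.c x (decide (z < (x : EReal)))
  | (k + 1), x, z =>
      P.c x (decide (z < (x : EReal))) +
        P.β * ∫ y, Bandit.Gk P k y z ∂(P.κ (decide (z < (x : EReal))) x)

/-- Finite-horizon marginal reward metric `f_k(x,z)`. -/
def Bandit.fk (P : Bandit) : ℕ → ℝ → EReal → ℝ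
  | 0, x, _ => P.r x true - P.r x false
  | (k + 1), x, z =>
      (P.r x true - P.r x false) +
        P.β * ((∫ y, P.Fk k y z ∂(P.κ true x)) - ∫ y, P.Fk k y z ∂(P.κ false x))

/-- Finite-horizon marginal resource metric `g_k(x,z)`. -/
def Bandit.gk (P : Bandit) : ℕ → ℝ → EReal → ℝ
  | 0, x, _ => P.c x true - P.c x false
  | (k + 1), x, z =>
      (P.c x true - P.c x false) +
        P.β * ((∫ y, P.Gk k y z ∂(P.κ true x)) - ∫ y, P.Gk k y z ∂(P.κ false x))

namespace Bandit

variable (P : Bandit)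

/-- Finite-horizon MP metric `m_k(x,z)`. -/
def mk' (k : ℕ) (x : ℝ) (z : EReal) : ℝ := P.fk k x z / P.gk k x z

/-- Finite-horizon MP index `m*_k(x)`. -/
def mkStar (k : ℕ) (x : ℝ) : ℝ := P.mk' k x (x : EReal)

/-- `g̲(x,z) = inf_k g_k(x,z)`. -/
def gbar (x : ℝ) (z : EReal) : ℝ := ⨅ k : ℕ, P.gk k x z

end Bandit

namespace Bandit

variable (P : Bandit)

lemma w_nn (x : ℝ) : 0 ≤ P.w x := zero_le_one.trans (P.hw_one x)

lemma γ_nn : 0 ≤ P.γ := P.hβ0.trans P.hβγ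

lemma integ_wbdd {μ : Measure ℝ} (hw : Integrable P.w μ) {h : ℝ → ℝ}
    (hm : Measurable h) {C : ℝ} (hb : ∀ y, |h y| ≤ C * P.w y) : Integrable h μ :=
  (hw.const_mul C).mono' hm.aestronglyMeasurable
    (ae_of_all _ fun y => by simpa [Real.norm_eq_abs] using hb y)

lemma integ_κ (a : Bool) (x : ℝ) {h : ℝ → ℝ} (hm : Measurable h) {C : ℝ}
    (hb : ∀ y, |h y| ≤ C * P.w y) : Integrable h (P.κ a x) :=
  P.integ_wbdd (P.hw_int a x) hm hb

lemma meas_kint (a : Bool) {h : ℝ → ℝ} (hm : Measurable h) :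
    Measurable fun x => ∫ y, h y ∂(P.κ a x) := by
  haveI := P.hκ a
  exact (MeasureTheory.StronglyMeasurable.integral_kernel_prod_right (κ := P.κ a)
    (f := fun _ y => h y) ((hm.comp measurable_snd).stronglyMeasurable)).measurable

/-- Uniqueness: a `w`-bounded measurable solution of the homogeneous fixed-point
equation vanishes. -/
lemma fix_zero (a : ℝ → Bool) {h : ℝ → ℝ} (hm : Measurable h) {C : ℝ}
    (hb : ∀ x, |h x| ≤ C * P.w x)
    (hfix : ∀ x, h x = P.β * ∫ y, h y ∂(P.κ (a x) x)) (x : ℝ) : h x = 0 := by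
  set C' := max C 0 with hC'
  have hC0 : 0 ≤ C' := le_max_right _ _
  have hb' : ∀ x, |h x| ≤ C' * P.w x := fun x =>
    (hb x).trans (mul_le_mul_of_nonneg_right (le_max_left _ _) (P.w_nn x))
  have key : ∀ n x, |h x| ≤ C' * P.γ ^ n * P.w x := by
    intro n
    induction n with
    | zero => intro x; simpa using hb' x
    | succ n ih =>
      intro x
      have hint : Integrable h (P.κ (a x) x) := P.integ_κ _ x hm hb'
      have h1 : |∫ y, h y ∂(P.κ (a x) x)| ≤ ∫ y, C' * P.γ ^ n * P.w y ∂(P.κ (a x) x) := by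
        refine (le_trans ?_ (integral_mono hint.abs ((P.hw_int (a x) x).const_mul _) ih))
        simpa [Real.norm_eq_abs] using norm_integral_le_integral_norm (μ := P.κ (a x) x) h
      calc |h x| = P.β * |∫ y, h y ∂(P.κ (a x) x)| := by
            rw [hfix x, abs_mul, abs_of_nonneg P.hβ0]
        _ ≤ P.β * ∫ y, C' * P.γ ^ n * P.w y ∂(P.κ (a x) x) :=
            mul_le_mul_of_nonneg_left h1 P.hβ0
        _ = C' * P.γ ^ n * (P.β * ∫ y, P.w y ∂(P.κ (a x) x)) := by
            rw [integral_const_mul]; ring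
        _ ≤ C' * P.γ ^ n * (P.γ * P.w x) :=
            mul_le_mul_of_nonneg_left (P.hw_drift (a x) x)
              (mul_nonneg hC0 (pow_nonneg P.γ_nn n))
        _ = C' * P.γ ^ (n + 1) * P.w x := by ring
  have hlim : Filter.Tendsto (fun n => C' * P.γ ^ n * P.w x) atTop (𝓝 0) := by
    have := (tendsto_pow_atTop_nhds_zero_of_lt_one P.γ_nn P.hγ1).const_mul C'
    simpa using this.mul_const (P.w x)
  have : |h x| ≤ 0 := ge_of_tendsto' hlim fun n => key n x
  exact abs_nonpos_iff.mp this

end Bandit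
namespace Bandit

variable (P : Bandit)

/-- Neumann-series iterates for the discounted occupation measure of the single state `z`
under the policy with action function `a`. -/
def uk' (a : ℝ → Bool) (z : ℝ) : ℕ → ℝ → ℝ
  | 0 => fun x => if x = z then 1 else 0
  | (t + 1) => fun x => P.β * ∫ y, uk' a z t y ∂(P.κ (a x) x)

lemma uk'_meas (a : ℝ → Bool) (z : ℝ) (ha : MeasurableSet {x : ℝ | a x = true}) :
    ∀ t, Measurable (P.uk' a z t) := by
  intro t
  induction t with
  | zero =>
    exact Measurable.ite (by simpa using (MeasurableSet.singleton z)) measurable_const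
      measurable_const
  | succ t ih =>
    have h1 := P.meas_kint true ih
    have h0 := P.meas_kint false ih
    have he : P.uk' a z (t + 1) = fun x =>
        P.β * (if a x = true then ∫ y, P.uk' a z t y ∂(P.κ true x)
          else ∫ y, P.uk' a z t y ∂(P.κ false x)) := by
      funext x
      cases h : a x <;> simp [uk', h]
    rw [he]
    exact (Measurable.ite ha h1 h0).const_mul _

lemma uk'_nonneg (a : ℝ → Bool) (z : ℝ) : ∀ t x, 0 ≤ P.uk' a z t x := by
  intro t
  induction t with
  | zero => intro x; dsimp [uk']; split <;> norm_num
  | succ t ih => intro x; exact mul_nonneg P.hβ0 (integral_nonneg fun y => ih y)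

lemma uk'_le (a : ℝ → Bool) (z : ℝ) (ha : MeasurableSet {x : ℝ | a x = true}) :
    ∀ t x, P.uk' a z t x ≤ P.γ ^ t * P.w x := by
  intro t
  induction t with
  | zero =>
    intro x; dsimp [uk']; split
    · simpa using P.hw_one x
    · simpa using P.w_nn x
  | succ t ih =>
    intro x
    have habs : ∀ y, |P.uk' a z t y| ≤ P.γ ^ t * P.w y := fun y => by
      rw [abs_of_nonneg (P.uk'_nonneg a z t y)]; exact ih y
    have hint : Integrable (P.uk' a z t) (P.κ (a x) x) :=
      P.integ_κ _ x (P.uk'_meas a z ha t) habs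
    calc P.uk' a z (t + 1) x = P.β * ∫ y, P.uk' a z t y ∂(P.κ (a x) x) := rfl
      _ ≤ P.β * ∫ y, P.γ ^ t * P.w y ∂(P.κ (a x) x) :=
          mul_le_mul_of_nonneg_left
            (integral_mono hint ((P.hw_int (a x) x).const_mul _) fun y => ih y) P.hβ0
      _ = P.γ ^ t * (P.β * ∫ y, P.w y ∂(P.κ (a x) x)) := by rw [integral_const_mul]; ring
      _ ≤ P.γ ^ t * (P.γ * P.w x) :=
          mul_le_mul_of_nonneg_left (P.hw_drift (a x) x) (pow_nonneg P.γ_nn t)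
      _ = P.γ ^ (t + 1) * P.w x := by ring

lemma uk'_abs_le (a : ℝ → Bool) (z : ℝ) (ha : MeasurableSet {x : ℝ | a x = true})
    (t : ℕ) (y : ℝ) : |P.uk' a z t y| ≤ P.γ ^ t * P.w y := by
  rw [abs_of_nonneg (P.uk'_nonneg a z t y)]; exact P.uk'_le a z ha t y

/-- The discounted expected number of visits to `z`. -/
def usum (a : ℝ → Bool) (z : ℝ) (x : ℝ) : ℝ := ∑' t, P.uk' a z t x

lemma usum_summable (a : ℝ → Bool) (z : ℝ) (ha : MeasurableSet {x : ℝ | a x = true}) (x : ℝ) :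
    Summable fun t => P.uk' a z t x :=
  Summable.of_nonneg_of_le (fun t => P.uk'_nonneg a z t x) (fun t => P.uk'_le a z ha t x)
    ((summable_geometric_of_lt_one P.γ_nn P.hγ1).mul_right (P.w x))

lemma usum_nonneg (a : ℝ → Bool) (z : ℝ) (x : ℝ) : 0 ≤ P.usum a z x :=
  tsum_nonneg fun t => P.uk'_nonneg a z t x

lemma usum_abs_le (a : ℝ → Bool) (z : ℝ) (ha : MeasurableSet {x : ℝ | a x = true}) (x : ℝ) :
    |P.usum a z x| ≤ (1 - P.γ)⁻¹ * P.w x := by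
  rw [abs_of_nonneg (P.usum_nonneg a z x)]
  calc P.usum a z x ≤ ∑' t, P.γ ^ t * P.w x :=
        Summable.tsum_le_tsum (fun t => P.uk'_le a z ha t x) (P.usum_summable a z ha x)
          ((summable_geometric_of_lt_one P.γ_nn P.hγ1).mul_right (P.w x))
    _ = (1 - P.γ)⁻¹ * P.w x := by
        rw [tsum_mul_right, tsum_geometric_of_lt_one P.γ_nn P.hγ1]

lemma usum_meas (a : ℝ → Bool) (z : ℝ) (ha : MeasurableSet {x : ℝ | a x = true}) :
    Measurable (P.usum a z) := by
  apply measurable_of_tendsto_metrizable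
    (f := fun n x => ∑ t ∈ Finset.range n, P.uk' a z t x)
  · exact fun n => Finset.measurable_sum _ fun t _ => P.uk'_meas a z ha t
  · rw [tendsto_pi_nhds]
    exact fun x => (P.usum_summable a z ha x).hasSum.tendsto_sum_nat

lemma usum_ge_one (a : ℝ → Bool) (z : ℝ) (ha : MeasurableSet {x : ℝ | a x = true}) :
    1 ≤ P.usum a z z := by
  have h := Summable.le_tsum (P.usum_summable a z ha z) 0 fun t _ => P.uk'_nonneg a z t z
  simpa [uk', usum] using h

lemma usum_fix (a : ℝ → Bool) (z : ℝ) (ha : MeasurableSet {x : ℝ | a x = true}) (x : ℝ) :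
    P.usum a z x = (if x = z then 1 else 0) +
      P.β * ∫ y, P.usum a z y ∂(P.κ (a x) x) := by
  have hint : ∀ t, Integrable (P.uk' a z t) (P.κ (a x) x) := fun t =>
    P.integ_κ _ x (P.uk'_meas a z ha t) (fun y => P.uk'_abs_le a z ha t y)
  have hnorm : Summable fun t => ∫ y, ‖P.uk' a z t y‖ ∂(P.κ (a x) x) := by
    refine Summable.of_nonneg_of_le (fun t => integral_nonneg fun y => norm_nonneg _)
      (fun t => ?_)
      ((summable_geometric_of_lt_one P.γ_nn P.hγ1).mul_right
        (∫ y, P.w y ∂(P.κ (a x) x)))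
    calc ∫ y, ‖P.uk' a z t y‖ ∂(P.κ (a x) x)
        ≤ ∫ y, P.γ ^ t * P.w y ∂(P.κ (a x) x) :=
          integral_mono (hint t).norm ((P.hw_int (a x) x).const_mul _) fun y => by
            simpa [Real.norm_eq_abs] using P.uk'_abs_le a z ha t y
      _ = P.γ ^ t * ∫ y, P.w y ∂(P.κ (a x) x) := integral_const_mul _ _
  have h0 : P.usum a z x = P.uk' a z 0 x + ∑' t, P.uk' a z (t + 1) x :=
    Summable.tsum_eq_zero_add (P.usum_summable a z ha x)
  have h2 : (∑' t, P.uk' a z (t + 1) x) =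
      P.β * ∫ y, P.usum a z y ∂(P.κ (a x) x) :=
    calc (∑' t, P.uk' a z (t + 1) x)
      = ∑' t, P.β * ∫ y, P.uk' a z t y ∂(P.κ (a x) x) := rfl
    _ = P.β * ∑' t, ∫ y, P.uk' a z t y ∂(P.κ (a x) x) := tsum_mul_left
    _ = P.β * ∫ y, ∑' t, P.uk' a z t y ∂(P.κ (a x) x) := by
        rw [integral_tsum_of_summable_integral_norm hint hnorm]
    _ = P.β * ∫ y, P.usum a z y ∂(P.κ (a x) x) := rfl
  rw [h0, h2, show P.uk' a z 0 x = (if x = z then 1 else 0) from rfl]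

end Bandit
namespace Bandit

variable (P : Bandit)

lemma dec_lt (z x : ℝ) : decide ((z : EReal) < (x : EReal)) = decide (z < x) :=
  decide_eq_decide.mpr EReal.coe_lt_coe_iff

lemma dec_le (z x : ℝ) : decide ((z : EReal) ≤ (x : EReal)) = decide (z ≤ x) :=
  decide_eq_decide.mpr EReal.coe_le_coe_iff

lemma dec_ne (z x : ℝ) (hxz : x ≠ z) : decide (z ≤ x) = decide (z < x) :=
  decide_eq_decide.mpr ⟨fun h => h.lt_of_ne (Ne.symm hxz), le_of_lt⟩

/-- The pointwise jump identity:
`g(z,z) ⬝ (F(x,z) - F(x,z⁻)) = f(z,z) ⬝ (G(x,z) - G(x,z⁻))`. -/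
lemma pointwise_jump (z : ℝ) (x : ℝ) :
    P.g z z * (P.F x z - P.Fm x z) = P.f z z * (P.G x z - P.Gm x z) := by
  classical
  obtain ⟨CF, hCF⟩ := P.hF_bdd z
  obtain ⟨CFm, hCFm⟩ := P.hFm_bdd z
  obtain ⟨CG, hCG⟩ := P.hG_bdd z
  obtain ⟨CGm, hCGm⟩ := P.hGm_bdd z
  set H : ℝ → ℝ := fun y =>
    P.g z z * (P.F y z - P.Fm y z) - P.f z z * (P.G y z - P.Gm y z) with hH
  have hmeas : Measurable H :=
    ((((P.hF_meas z).sub (P.hFm_meas z)).const_mul _).sub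
      (((P.hG_meas z).sub (P.hGm_meas z)).const_mul _))
  have hbd : ∀ y, |H y| ≤
      (|P.g z z| * (CF + CFm) + |P.f z z| * (CG + CGm)) * P.w y := by
    intro y
    calc |H y| ≤ |P.g z z * (P.F y z - P.Fm y z)| + |P.f z z * (P.G y z - P.Gm y z)| :=
          abs_sub _ _
      _ = |P.g z z| * |P.F y z - P.Fm y z| + |P.f z z| * |P.G y z - P.Gm y z| := by
          rw [abs_mul, abs_mul]
      _ ≤ |P.g z z| * (|P.F y z| + |P.Fm y z|) + |P.f z z| * (|P.G y z| + |P.Gm y z|) := by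
          gcongr <;> exact abs_sub _ _
      _ ≤ |P.g z z| * (CF * P.w y + CFm * P.w y) +
            |P.f z z| * (CG * P.w y + CGm * P.w y) := by
          gcongr <;> first
            | exact hCF y | exact hCFm y | exact hCG y | exact hCGm y
            | exact abs_nonneg _
      _ = (|P.g z z| * (CF + CFm) + |P.f z z| * (CG + CGm)) * P.w y := by ring
  have iF : ∀ (c : Bool) (x' : ℝ), Integrable (fun y => P.F y z) (P.κ c x') :=
    fun c x' => P.integ_κ c x' (P.hF_meas z) hCF
  have iFm : ∀ (c : Bool) (x' : ℝ), Integrable (fun y => P.Fm y z) (P.κ c x') :=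
    fun c x' => P.integ_κ c x' (P.hFm_meas z) hCFm
  have iG : ∀ (c : Bool) (x' : ℝ), Integrable (fun y => P.G y z) (P.κ c x') :=
    fun c x' => P.integ_κ c x' (P.hG_meas z) hCG
  have iGm : ∀ (c : Bool) (x' : ℝ), Integrable (fun y => P.Gm y z) (P.κ c x') :=
    fun c x' => P.integ_κ c x' (P.hGm_meas z) hCGm
  have hint : ∀ (c : Bool) (x' : ℝ), ∫ y, H y ∂(P.κ c x') =
      P.g z z * ((∫ y, P.F y z ∂(P.κ c x')) - ∫ y, P.Fm y z ∂(P.κ c x')) -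
        P.f z z * ((∫ y, P.G y z ∂(P.κ c x')) - ∫ y, P.Gm y z ∂(P.κ c x')) := by
    intro c x'
    have I1 : Integrable (fun y => P.g z z * (P.F y z - P.Fm y z)) (P.κ c x') :=
      ((iF c x').sub (iFm c x')).const_mul _
    have I2 : Integrable (fun y => P.f z z * (P.G y z - P.Gm y z)) (P.κ c x') :=
      ((iG c x').sub (iGm c x')).const_mul _
    have I3 : Integrable (fun y => P.F y z - P.Fm y z) (P.κ c x') :=
      (iF c x').sub (iFm c x')
    have I4 : Integrable (fun y => P.G y z - P.Gm y z) (P.κ c x') :=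
      (iG c x').sub (iGm c x')
    rw [hH]
    rw [integral_sub I1 I2, integral_const_mul, integral_const_mul,
      integral_sub (iF c x') (iFm c x'), integral_sub (iG c x') (iGm c x')]
  have hfix : ∀ x', H x' = P.β * ∫ y, H y ∂(P.κ (decide (z ≤ x')) x') := by
    intro x'
    rw [hint (decide (z ≤ x')) x']
    by_cases hxz : x' = z
    · rw [hxz]
      have eF : P.F z z = P.r z false + P.β * ∫ y, P.F y z ∂(P.κ false z) := by
        have h := P.hF_eq z z
        rwa [dec_lt z z, decide_eq_false (lt_irrefl z)] at h
      have eG : P.G z z = P.c z false + P.β * ∫ y, P.G y z ∂(P.κ false z) := by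
        have h := P.hG_eq z z
        rwa [dec_lt z z, decide_eq_false (lt_irrefl z)] at h
      have eFm : P.Fm z z = P.r z true + P.β * ∫ y, P.Fm y z ∂(P.κ true z) := by
        have h := P.hFm_eq z z
        rwa [dec_le z z, decide_eq_true (le_refl z)] at h
      have eGm : P.Gm z z = P.c z true + P.β * ∫ y, P.Gm y z ∂(P.κ true z) := by
        have h := P.hGm_eq z z
        rwa [dec_le z z, decide_eq_true (le_refl z)] at h
      rw [decide_eq_true (le_refl z)]
      simp only [hH, eF, eFm, eG, eGm, Bandit.f, Bandit.g]
      ring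
    · have hb : decide (z ≤ x') = decide (z < x') := dec_ne z x' hxz
      rw [hb]
      have eF : P.F x' z = P.r x' (decide (z < x')) +
          P.β * ∫ y, P.F y z ∂(P.κ (decide (z < x')) x') := by
        have h := P.hF_eq x' z; rwa [dec_lt z x'] at h
      have eG : P.G x' z = P.c x' (decide (z < x')) +
          P.β * ∫ y, P.G y z ∂(P.κ (decide (z < x')) x') := by
        have h := P.hG_eq x' z; rwa [dec_lt z x'] at h
      have eFm : P.Fm x' z = P.r x' (decide (z < x')) +
          P.β * ∫ y, P.Fm y z ∂(P.κ (decide (z < x')) x') := by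
        have h := P.hFm_eq x' z; rwa [dec_le z x', hb] at h
      have eGm : P.Gm x' z = P.c x' (decide (z < x')) +
          P.β * ∫ y, P.Gm y z ∂(P.κ (decide (z < x')) x') := by
        have h := P.hGm_eq x' z; rwa [dec_le z x', hb] at h
      simp only [hH, eF, eFm, eG, eGm]
      ring
  have hzero : P.g z z * (P.F x z - P.Fm x z) - P.f z z * (P.G x z - P.Gm x z) = 0 :=
    P.fix_zero (fun x' => decide (z ≤ x')) hmeas hbd hfix x
  linarith [hzero]

/-- `G(x,z⁻) - G(x,z) = g(z,z)·u(x)` for the `z⁻`-occupation function `u`. -/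
lemma Gm_sub_G (z : ℝ) (x : ℝ) :
    P.Gm x z - P.G x z = P.g z z * P.usum (fun x' => decide (z ≤ x')) z x := by
  classical
  obtain ⟨CG, hCG⟩ := P.hG_bdd z
  obtain ⟨CGm, hCGm⟩ := P.hGm_bdd z
  set a : ℝ → Bool := fun x' => decide (z ≤ x') with haa
  have ha : MeasurableSet {x' : ℝ | a x' = true} := by
    have : {x' : ℝ | a x' = true} = Set.Ici z := by
      ext x'; simp [haa]
    rw [this]; exact measurableSet_Ici
  set u : ℝ → ℝ := P.usum a z with hu
  set H : ℝ → ℝ := fun y => P.Gm y z - P.G y z - P.g z z * u y with hH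
  have humeas : Measurable u := P.usum_meas a z ha
  have huabs : ∀ y, |u y| ≤ (1 - P.γ)⁻¹ * P.w y := fun y => P.usum_abs_le a z ha y
  have hmeas : Measurable H :=
    (((P.hGm_meas z).sub (P.hG_meas z)).sub (humeas.const_mul _))
  have hbd : ∀ y, |H y| ≤ (CGm + CG + |P.g z z| * (1 - P.γ)⁻¹) * P.w y := by
    intro y
    calc |H y| ≤ |P.Gm y z - P.G y z| + |P.g z z * u y| := abs_sub _ _
      _ ≤ (|P.Gm y z| + |P.G y z|) + |P.g z z| * |u y| := by
          rw [abs_mul]; gcongr; exact abs_sub _ _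
      _ ≤ (CGm * P.w y + CG * P.w y) + |P.g z z| * ((1 - P.γ)⁻¹ * P.w y) := by
          gcongr <;> first
            | exact hCGm y | exact hCG y | exact huabs y | exact abs_nonneg _
      _ = (CGm + CG + |P.g z z| * (1 - P.γ)⁻¹) * P.w y := by ring
  have iG : ∀ (c : Bool) (x' : ℝ), Integrable (fun y => P.G y z) (P.κ c x') :=
    fun c x' => P.integ_κ c x' (P.hG_meas z) hCG
  have iGm : ∀ (c : Bool) (x' : ℝ), Integrable (fun y => P.Gm y z) (P.κ c x') :=
    fun c x' => P.integ_κ c x' (P.hGm_meas z) hCGm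
  have iu : ∀ (c : Bool) (x' : ℝ), Integrable u (P.κ c x') :=
    fun c x' => P.integ_κ c x' humeas huabs
  have hint : ∀ (c : Bool) (x' : ℝ), ∫ y, H y ∂(P.κ c x') =
      (∫ y, P.Gm y z ∂(P.κ c x')) - (∫ y, P.G y z ∂(P.κ c x')) -
        P.g z z * ∫ y, u y ∂(P.κ c x') := by
    intro c x'
    have I1 : Integrable (fun y => P.Gm y z - P.G y z) (P.κ c x') :=
      (iGm c x').sub (iG c x')
    have I2 : Integrable (fun y => P.g z z * u y) (P.κ c x') :=
      (iu c x').const_mul _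
    rw [hH]
    rw [integral_sub I1 I2, integral_sub (iGm c x') (iG c x'), integral_const_mul]
  have hfix : ∀ x', H x' = P.β * ∫ y, H y ∂(P.κ (a x') x') := by
    intro x'
    rw [hint (a x') x']
    have eu := P.usum_fix a z ha x'
    rw [← hu] at eu
    by_cases hxz : x' = z
    · rw [hxz] at eu ⊢
      have haz : a z = true := decide_eq_true (le_refl z)
      rw [haz] at eu ⊢
      rw [if_pos rfl] at eu
      have eG : P.G z z = P.c z false + P.β * ∫ y, P.G y z ∂(P.κ false z) := by
        have h := P.hG_eq z z
        rwa [dec_lt z z, decide_eq_false (lt_irrefl z)] at h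
      have eGm : P.Gm z z = P.c z true + P.β * ∫ y, P.Gm y z ∂(P.κ true z) := by
        have h := P.hGm_eq z z
        rwa [dec_le z z, decide_eq_true (le_refl z)] at h
      simp only [hH]
      rw [eG, eGm, eu]
      simp only [Bandit.g]
      ring
    · have hb : a x' = decide (z < x') := dec_ne z x' hxz
      rw [hb] at eu ⊢
      rw [if_neg hxz] at eu
      have eG : P.G x' z = P.c x' (decide (z < x')) +
          P.β * ∫ y, P.G y z ∂(P.κ (decide (z < x')) x') := by
        have h := P.hG_eq x' z; rwa [dec_lt z x'] at h
      have eGm : P.Gm x' z = P.c x' (decide (z < x')) +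
          P.β * ∫ y, P.Gm y z ∂(P.κ (decide (z < x')) x') := by
        have h := P.hGm_eq x' z; rwa [dec_le z x', dec_ne z x' hxz] at h
      simp only [hH]
      rw [eG, eGm, eu]
      ring
  have hzero : P.Gm x z - P.G x z - P.g z z * u x = 0 := P.fix_zero a hmeas hbd hfix x
  have hux : u x = P.usum (fun x' => decide (z ≤ x')) z x := rfl
  linarith [hzero, hux ▸ hzero]

/-- `G(x,z⁻) - G(x,z) = g(z,z⁻)·u⁰(x)` for the `z`-occupation function `u⁰`. -/
lemma Gm_sub_G' (z : ℝ) (x : ℝ) :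
    P.Gm x z - P.G x z = P.gm z z * P.usum (fun x' => decide (z < x')) z x := by
  classical
  obtain ⟨CG, hCG⟩ := P.hG_bdd z
  obtain ⟨CGm, hCGm⟩ := P.hGm_bdd z
  set a : ℝ → Bool := fun x' => decide (z < x') with haa
  have ha : MeasurableSet {x' : ℝ | a x' = true} := by
    have : {x' : ℝ | a x' = true} = Set.Ioi z := by
      ext x'; simp [haa]
    rw [this]; exact measurableSet_Ioi
  set u : ℝ → ℝ := P.usum a z with hu
  set H : ℝ → ℝ := fun y => P.Gm y z - P.G y z - P.gm z z * u y with hH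
  have humeas : Measurable u := P.usum_meas a z ha
  have huabs : ∀ y, |u y| ≤ (1 - P.γ)⁻¹ * P.w y := fun y => P.usum_abs_le a z ha y
  have hmeas : Measurable H :=
    (((P.hGm_meas z).sub (P.hG_meas z)).sub (humeas.const_mul _))
  have hbd : ∀ y, |H y| ≤ (CGm + CG + |P.gm z z| * (1 - P.γ)⁻¹) * P.w y := by
    intro y
    calc |H y| ≤ |P.Gm y z - P.G y z| + |P.gm z z * u y| := abs_sub _ _
      _ ≤ (|P.Gm y z| + |P.G y z|) + |P.gm z z| * |u y| := by
          rw [abs_mul]; gcongr; exact abs_sub _ _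
      _ ≤ (CGm * P.w y + CG * P.w y) + |P.gm z z| * ((1 - P.γ)⁻¹ * P.w y) := by
          gcongr <;> first
            | exact hCGm y | exact hCG y | exact huabs y | exact abs_nonneg _
      _ = (CGm + CG + |P.gm z z| * (1 - P.γ)⁻¹) * P.w y := by ring
  have iG : ∀ (c : Bool) (x' : ℝ), Integrable (fun y => P.G y z) (P.κ c x') :=
    fun c x' => P.integ_κ c x' (P.hG_meas z) hCG
  have iGm : ∀ (c : Bool) (x' : ℝ), Integrable (fun y => P.Gm y z) (P.κ c x') :=
    fun c x' => P.integ_κ c x' (P.hGm_meas z) hCGm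
  have iu : ∀ (c : Bool) (x' : ℝ), Integrable u (P.κ c x') :=
    fun c x' => P.integ_κ c x' humeas huabs
  have hint : ∀ (c : Bool) (x' : ℝ), ∫ y, H y ∂(P.κ c x') =
      (∫ y, P.Gm y z ∂(P.κ c x')) - (∫ y, P.G y z ∂(P.κ c x')) -
        P.gm z z * ∫ y, u y ∂(P.κ c x') := by
    intro c x'
    have I1 : Integrable (fun y => P.Gm y z - P.G y z) (P.κ c x') :=
      (iGm c x').sub (iG c x')
    have I2 : Integrable (fun y => P.gm z z * u y) (P.κ c x') :=
      (iu c x').const_mul _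
    rw [hH]
    rw [integral_sub I1 I2, integral_sub (iGm c x') (iG c x'), integral_const_mul]
  have hfix : ∀ x', H x' = P.β * ∫ y, H y ∂(P.κ (a x') x') := by
    intro x'
    rw [hint (a x') x']
    have eu := P.usum_fix a z ha x'
    rw [← hu] at eu
    by_cases hxz : x' = z
    · rw [hxz] at eu ⊢
      have haz : a z = false := decide_eq_false (lt_irrefl z)
      rw [haz] at eu ⊢
      rw [if_pos rfl] at eu
      have eG : P.G z z = P.c z false + P.β * ∫ y, P.G y z ∂(P.κ false z) := by
        have h := P.hG_eq z z
        rwa [dec_lt z z, decide_eq_false (lt_irrefl z)] at h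
      have eGm : P.Gm z z = P.c z true + P.β * ∫ y, P.Gm y z ∂(P.κ true z) := by
        have h := P.hGm_eq z z
        rwa [dec_le z z, decide_eq_true (le_refl z)] at h
      simp only [hH]
      rw [eG, eGm, eu]
      simp only [Bandit.gm]
      ring
    · have hb : decide (z ≤ x') = a x' := dec_ne z x' hxz
      rw [if_neg hxz] at eu
      have eG : P.G x' z = P.c x' (a x') +
          P.β * ∫ y, P.G y z ∂(P.κ (a x') x') := by
        have h := P.hG_eq x' z; rwa [dec_lt z x'] at h
      have eGm : P.Gm x' z = P.c x' (a x') +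
          P.β * ∫ y, P.Gm y z ∂(P.κ (a x') x') := by
        have h := P.hGm_eq x' z; rwa [dec_le z x', hb] at h
      simp only [hH]
      rw [eG, eGm, eu]
      ring
  have hzero : P.Gm x z - P.G x z - P.gm z z * u x = 0 := P.fix_zero a hmeas hbd hfix x
  have hux : u x = P.usum (fun x' => decide (z < x')) z x := rfl
  rw [hux] at hzero
  linarith [hzero]

lemma gm_pos (h1 : P.PCLI1) (z : ℝ) : 0 < P.gm z z := by
  classical
  have haLe : MeasurableSet {x' : ℝ | (fun x' => decide (z ≤ x')) x' = true} := by
    have : {x' : ℝ | (fun x' : ℝ => decide (z ≤ x')) x' = true} = Set.Ici z := by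
      ext x'; simp
    rw [this]; exact measurableSet_Ici
  have haLt : MeasurableSet {x' : ℝ | (fun x' => decide (z < x')) x' = true} := by
    have : {x' : ℝ | (fun x' : ℝ => decide (z < x')) x' = true} = Set.Ioi z := by
      ext x'; simp
    rw [this]; exact measurableSet_Ioi
  have h1' := P.Gm_sub_G z z
  have h2 := P.Gm_sub_G' z z
  have hu : 0 < P.usum (fun x' => decide (z ≤ x')) z z :=
    lt_of_lt_of_le one_pos (P.usum_ge_one _ z haLe)
  have hu0 : 0 < P.usum (fun x' => decide (z < x')) z z :=
    lt_of_lt_of_le one_pos (P.usum_ge_one _ z haLt)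
  have hg : 0 < P.g z z := h1 z z
  have heq : P.gm z z * P.usum (fun x' => decide (z < x')) z z =
      P.g z z * P.usum (fun x' => decide (z ≤ x')) z z := by
    rw [← h2, ← h1']
  have : P.gm z z = P.g z z * P.usum (fun x' => decide (z ≤ x')) z z /
      P.usum (fun x' => decide (z < x')) z z := by
    field_simp
    linarith [heq]
  rw [this]
  exact div_pos (mul_pos hg hu) hu0

end Bandit
/-- Under (PCLI1): (a) jumps of `F(p,·)` are `m*` times jumps of `G(p,·)`;
(b) jumps of `f(x,·)` are `m*` times jumps of `g(x,·)`;
(c) `g(x,x⁻) > 0` and `m(x,x⁻) = m(x,x) = m*(x)`,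
i.e. `f(x,x⁻) = m*(x)·g(x,x⁻)`. -/
theorem jump_relations (P : Bandit) (h1 : P.PCLI1) :
    (∀ p : Measure ℝ, P.IsInitDist p → ∀ z : ℝ,
      P.Fp p z - P.Fmp p z = P.mStar z * (P.Gp p z - P.Gmp p z)) ∧
    (∀ x z : ℝ, P.f x z - P.fm x z = P.mStar z * (P.g x z - P.gm x z)) ∧
    (∀ x : ℝ, 0 < P.gm x x ∧ P.mm x x = P.mStar x ∧
      P.fm x x = P.mStar x * P.gm x x) := by
  classical
  have hpt : ∀ (z : ℝ) (x : ℝ),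
      P.F x z - P.Fm x z = P.mStar z * (P.G x z - P.Gm x z) := by
    intro z x
    have hg : P.g z z ≠ 0 := ne_of_gt (h1 z z)
    have h := P.pointwise_jump z x
    have hm : P.mStar z = P.f z z / P.g z z := rfl
    rw [hm]
    field_simp
    linarith [h]
  have hb : ∀ x z : ℝ, P.f x z - P.fm x z = P.mStar z * (P.g x z - P.gm x z) := by
    intro x z
    obtain ⟨CF, hCF⟩ := P.hF_bdd z
    obtain ⟨CFm, hCFm⟩ := P.hFm_bdd z
    obtain ⟨CG, hCG⟩ := P.hG_bdd z
    obtain ⟨CGm, hCGm⟩ := P.hGm_bdd z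
    have iF : ∀ c : Bool, Integrable (fun y => P.F y z) (P.κ c x) :=
      fun c => P.integ_κ c x (P.hF_meas z) hCF
    have iFm : ∀ c : Bool, Integrable (fun y => P.Fm y z) (P.κ c x) :=
      fun c => P.integ_κ c x (P.hFm_meas z) hCFm
    have iG : ∀ c : Bool, Integrable (fun y => P.G y z) (P.κ c x) :=
      fun c => P.integ_κ c x (P.hG_meas z) hCG
    have iGm : ∀ c : Bool, Integrable (fun y => P.Gm y z) (P.κ c x) :=
      fun c => P.integ_κ c x (P.hGm_meas z) hCGm
    have k : ∀ c : Bool, (∫ y, P.F y z ∂(P.κ c x)) - (∫ y, P.Fm y z ∂(P.κ c x)) =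
        P.mStar z * ((∫ y, P.G y z ∂(P.κ c x)) - ∫ y, P.Gm y z ∂(P.κ c x)) := by
      intro c
      rw [← integral_sub (iF c) (iFm c), ← integral_sub (iG c) (iGm c),
        ← integral_const_mul]
      exact integral_congr_ae (ae_of_all _ fun y => hpt z y)
    simp only [Bandit.f, Bandit.fm, Bandit.g, Bandit.gm]
    linear_combination P.β * k true - P.β * k false
  refine ⟨?_, hb, ?_⟩
  · intro p hp z
    obtain ⟨hprob, hwint⟩ := hp
    obtain ⟨CF, hCF⟩ := P.hF_bdd z
    obtain ⟨CFm, hCFm⟩ := P.hFm_bdd z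
    obtain ⟨CG, hCG⟩ := P.hG_bdd z
    obtain ⟨CGm, hCGm⟩ := P.hGm_bdd z
    have iF : Integrable (fun y => P.F y z) p := P.integ_wbdd hwint (P.hF_meas z) hCF
    have iFm : Integrable (fun y => P.Fm y z) p := P.integ_wbdd hwint (P.hFm_meas z) hCFm
    have iG : Integrable (fun y => P.G y z) p := P.integ_wbdd hwint (P.hG_meas z) hCG
    have iGm : Integrable (fun y => P.Gm y z) p := P.integ_wbdd hwint (P.hGm_meas z) hCGm
    simp only [Bandit.Fp, Bandit.Fmp, Bandit.Gp, Bandit.Gmp]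
    rw [← integral_sub iF iFm, ← integral_sub iG iGm, ← integral_const_mul]
    exact integral_congr_ae (ae_of_all _ fun y => hpt z y)
  · intro x
    have hgm := P.gm_pos h1 x
    have hbx := hb x x
    have hf : P.f x x = P.mStar x * P.g x x := by
      have hm : P.mStar x = P.f x x / P.g x x := rfl
      rw [hm]
      field_simp [ne_of_gt (h1 x x)]
    have hfm : P.fm x x = P.mStar x * P.gm x x := by linarith [hbx, hf]
    refine ⟨hgm, ?_, hfm⟩
    show P.fm x x / P.gm x x = P.mStar x
    rw [hfm]
    exact mul_div_cancel_right₀ _ (ne_of_gt hgm)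
end
end

section
/- Assume the project is PCL-indexable, i.e., conditions (PCLI1), (PCLI2) and (PCLI3) hold. Then for every initial distribution p on ℝ with ∫ w dp < ∞, the MP index m* is integrable with respect to the Lebesgue–Stieltjes measure ν_{G(p,·)}: ∫_ℝ |m*| dν_{G(p,·)} < ∞. -/
open MeasureTheory ProbabilityTheory Filter Topology Set

noncomputable section

namespace Bandit
variable (P : Bandit)

lemma w_pos (x : ℝ) : 0 < P.w x := lt_of_lt_of_le one_pos (P.hw_one x)

lemma int_of_bound {μ : Measure ℝ} (hwμ : Integrable P.w μ) {h : ℝ → ℝ}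
    (hm : Measurable h) {C : ℝ} (hb : ∀ y, |h y| ≤ C * P.w y) : Integrable h μ :=
  (hwμ.const_mul C).mono' hm.aestronglyMeasurable
    (ae_of_all _ fun y => by rw [Real.norm_eq_abs]; exact hb y)

lemma fixpoint_nonneg (u b : ℝ → ℝ) (σ : ℝ → Bool)
    (hu : Measurable u) (C : ℝ) (hC : ∀ x, |u x| ≤ C * P.w x)
    (hb : ∀ x, 0 ≤ b x)
    (heq : ∀ x, u x = b x + P.β * ∫ y, u y ∂(P.κ (σ x) x)) :
    ∀ x, 0 ≤ u x := by
  have hC0 : 0 ≤ C := by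
    have := (abs_nonneg (u 0)).trans (hC 0)
    nlinarith [P.w_pos 0]
  have hγ0 : 0 ≤ P.γ := le_trans P.hβ0 P.hβγ
  have key : ∀ n x, -(C * P.γ ^ n) * P.w x ≤ u x := by
    intro n
    induction n with
    | zero => intro x; simpa using neg_le_of_abs_le (by simpa using hC x)
    | succ n ih =>
      intro x
      have hint : Integrable u (P.κ (σ x) x) := P.int_of_bound (P.hw_int _ x) hu hC
      have hmono : ∫ y, (-(C * P.γ ^ n) * P.w y) ∂(P.κ (σ x) x) ≤ ∫ y, u y ∂(P.κ (σ x) x) :=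
        integral_mono ((P.hw_int _ x).const_mul _) hint ih
      have hconst : ∫ y, (-(C * P.γ ^ n) * P.w y) ∂(P.κ (σ x) x)
          = -(C * P.γ ^ n) * ∫ y, P.w y ∂(P.κ (σ x) x) := integral_const_mul _ _
      have hdrift := P.hw_drift (σ x) x
      have e1 : -(C * P.γ ^ n) ≤ 0 := by
        have : 0 ≤ C * P.γ ^ n := by positivity
        linarith
      calc -(C * P.γ ^ (n+1)) * P.w x = -(C * P.γ ^ n) * (P.γ * P.w x) := by ring
        _ ≤ -(C * P.γ ^ n) * (P.β * ∫ y, P.w y ∂(P.κ (σ x) x)) :=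
            mul_le_mul_of_nonpos_left hdrift e1
        _ = P.β * (-(C * P.γ ^ n) * ∫ y, P.w y ∂(P.κ (σ x) x)) := by ring
        _ = P.β * ∫ y, (-(C * P.γ ^ n) * P.w y) ∂(P.κ (σ x) x) := by rw [hconst]
        _ ≤ P.β * ∫ y, u y ∂(P.κ (σ x) x) := mul_le_mul_of_nonneg_left hmono P.hβ0
        _ ≤ b x + P.β * ∫ y, u y ∂(P.κ (σ x) x) := le_add_of_nonneg_left (hb x)
        _ = u x := (heq x).symm
  intro x
  have : Tendsto (fun n => -(C * P.γ ^ n) * P.w x) atTop (𝓝 0) := by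
    have := (tendsto_pow_atTop_nhds_zero_of_lt_one hγ0 P.hγ1).const_mul C
    simpa using (this.neg.mul_const (P.w x))
  exact le_of_tendsto' this (fun n => key n x)


lemma fixpoint_bound (u b : ℝ → ℝ) (σ : ℝ → Bool)
    (hu : Measurable u) (C : ℝ) (hC : ∀ x, |u x| ≤ C * P.w x)
    (hb : ∀ x, |b x| ≤ P.M * P.w x)
    (heq : ∀ x, u x = b x + P.β * ∫ y, u y ∂(P.κ (σ x) x)) :
    ∀ x, |u x| ≤ P.M / (1 - P.γ) * P.w x := by
  set CF : ℝ := P.M / (1 - P.γ) with hCF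
  have hγ0 : 0 ≤ P.γ := le_trans P.hβ0 P.hβγ
  have h1γ : 0 < 1 - P.γ := by linarith [P.hγ1]
  have hCF0 : 0 ≤ CF := div_nonneg P.hM.le h1γ.le
  set K : ℝ := max (C - CF) 0 with hK
  have hK0 : 0 ≤ K := le_max_right _ _
  have key : ∀ n x, |u x| ≤ (CF + P.γ ^ n * K) * P.w x := by
    intro n
    induction n with
    | zero =>
      intro x
      have hKval : C - CF ≤ K := le_max_left _ _
      have : C ≤ CF + 1 * K := by linarith
      exact (hC x).trans (mul_le_mul_of_nonneg_right (by simpa using this) (P.w_pos x).le)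
    | succ n ih =>
      intro x
      have hcn : 0 ≤ CF + P.γ ^ n * K := by positivity
      have hint : Integrable u (P.κ (σ x) x) := P.int_of_bound (P.hw_int _ x) hu hC
      have habs : |∫ y, u y ∂(P.κ (σ x) x)| ≤ ∫ y, |u y| ∂(P.κ (σ x) x) := by
        simpa [Real.norm_eq_abs] using norm_integral_le_integral_norm (μ := P.κ (σ x) x) u
      have hmono : ∫ y, |u y| ∂(P.κ (σ x) x) ≤ ∫ y, ((CF + P.γ ^ n * K) * P.w y) ∂(P.κ (σ x) x) :=
        integral_mono hint.abs ((P.hw_int _ x).const_mul _) ih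
      have hconst : ∫ y, ((CF + P.γ ^ n * K) * P.w y) ∂(P.κ (σ x) x)
          = (CF + P.γ ^ n * K) * ∫ y, P.w y ∂(P.κ (σ x) x) := integral_const_mul _ _
      have hdrift := P.hw_drift (σ x) x
      have step : P.β * |∫ y, u y ∂(P.κ (σ x) x)| ≤ (CF + P.γ ^ n * K) * (P.γ * P.w x) := by
        calc P.β * |∫ y, u y ∂(P.κ (σ x) x)|
            ≤ P.β * ((CF + P.γ ^ n * K) * ∫ y, P.w y ∂(P.κ (σ x) x)) := by
              rw [← hconst]
              exact mul_le_mul_of_nonneg_left (habs.trans hmono) P.hβ0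
          _ = (CF + P.γ ^ n * K) * (P.β * ∫ y, P.w y ∂(P.κ (σ x) x)) := by ring
          _ ≤ (CF + P.γ ^ n * K) * (P.γ * P.w x) := mul_le_mul_of_nonneg_left hdrift hcn
      have : |u x| ≤ |b x| + P.β * |∫ y, u y ∂(P.κ (σ x) x)| := by
        rw [heq x]
        refine (abs_add_le _ _).trans ?_
        rw [abs_mul, abs_of_nonneg P.hβ0]
      calc |u x| ≤ |b x| + P.β * |∫ y, u y ∂(P.κ (σ x) x)| := this
        _ ≤ P.M * P.w x + (CF + P.γ ^ n * K) * (P.γ * P.w x) := add_le_add (hb x) step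
        _ = (CF + P.γ ^ (n+1) * K) * P.w x := by
            have hMCF : P.M + P.γ * CF = CF := by
              rw [hCF]; field_simp; ring
            linear_combination (P.w x) * hMCF
  intro x
  have hlim : Tendsto (fun n => (CF + P.γ ^ n * K) * P.w x) atTop (𝓝 (CF * P.w x)) := by
    have h1 : Tendsto (fun n : ℕ => P.γ ^ n) atTop (𝓝 0) :=
      tendsto_pow_atTop_nhds_zero_of_lt_one hγ0 P.hγ1
    have := ((h1.mul_const K).const_add CF).mul_const (P.w x)
    simpa using this
  exact ge_of_tendsto' hlim (fun n => key n x)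


lemma c_nonneg (x : ℝ) (a : Bool) : 0 ≤ P.c x a := by
  cases a
  · exact P.hc0 x
  · exact (P.hc0 x).trans (P.hc01 x).le

lemma c_abs_bd (x : ℝ) (a : Bool) : |P.c x a| ≤ P.M * P.w x := by
  rw [abs_of_nonneg (P.c_nonneg x a)]; exact P.hc_bd x a

lemma G_unif (z : EReal) (x : ℝ) : |P.G x z| ≤ P.M / (1 - P.γ) * P.w x := by
  obtain ⟨C, hC⟩ := P.hG_bdd z
  exact P.fixpoint_bound (fun x => P.G x z) (fun x => P.c x (decide (z < (x : EReal))))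
    (fun x => decide (z < (x : EReal))) (P.hG_meas z) C hC
    (fun x => P.c_abs_bd x _) (fun x => P.hG_eq x z) x

lemma G_int (z : EReal) (a : Bool) (x : ℝ) : Integrable (fun y => P.G y z) (P.κ a x) :=
  P.int_of_bound (P.hw_int a x) (P.hG_meas z) (fun y => P.G_unif z y)

lemma dec_lt_true {z x : ℝ} (h : z < x) : decide ((z : EReal) < (x : EReal)) = true :=
  decide_eq_true (EReal.coe_lt_coe_iff.mpr h)

lemma dec_lt_false {z x : ℝ} (h : ¬ z < x) : decide ((z : EReal) < (x : EReal)) = false :=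
  decide_eq_false (fun hc => h (EReal.coe_lt_coe_iff.mp hc))

lemma Gdiff_eq (z₁ z₂ : ℝ) (h12 : z₁ ≤ z₂) (x : ℝ) :
    P.G x (z₁ : EReal) - P.G x (z₂ : EReal) =
      (if z₁ < x ∧ x ≤ z₂ then P.g x (z₂ : EReal) else 0) +
        P.β * ∫ y, (P.G y (z₁ : EReal) - P.G y (z₂ : EReal))
          ∂(P.κ (decide ((z₁ : EReal) < (x : EReal))) x) := by
  have e1 := P.hG_eq x (z₁ : EReal)
  have e2 := P.hG_eq x (z₂ : EReal)
  by_cases h1 : z₁ < x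
  · rw [dec_lt_true h1] at e1 ⊢
    rw [integral_sub (P.G_int _ true x) (P.G_int _ true x)]
    by_cases h2 : z₂ < x
    · rw [dec_lt_true h2] at e2
      rw [if_neg (by rintro ⟨-, hle⟩; exact absurd h2 (not_lt.mpr hle))]
      rw [e1, e2]; ring
    · rw [dec_lt_false h2] at e2
      rw [if_pos ⟨h1, not_lt.mp h2⟩]
      rw [e1, e2, g]; ring
  · have h2' : ¬ z₂ < x := fun hc => h1 (lt_of_le_of_lt h12 hc)
    rw [dec_lt_false h1] at e1 ⊢
    rw [dec_lt_false h2'] at e2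
    rw [integral_sub (P.G_int _ false x) (P.G_int _ false x)]
    rw [if_neg (by rintro ⟨hlt, -⟩; exact h1 hlt)]
    rw [e1, e2]; ring

lemma G_antitone (hg : ∀ x z, 0 < P.g x z) (z₁ z₂ : ℝ) (h12 : z₁ ≤ z₂) (x : ℝ) :
    P.G x (z₂ : EReal) ≤ P.G x (z₁ : EReal) := by
  have h := P.fixpoint_nonneg (fun x => P.G x (z₁ : EReal) - P.G x (z₂ : EReal))
    (fun x => if z₁ < x ∧ x ≤ z₂ then P.g x (z₂ : EReal) else 0)
    (fun x => decide ((z₁ : EReal) < (x : EReal)))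
    ((P.hG_meas _).sub (P.hG_meas _)) (2 * (P.M / (1 - P.γ)))
    (fun x => by
      have h1 := P.G_unif (z₁ : EReal) x
      have h2 := P.G_unif (z₂ : EReal) x
      have h3 : |P.G x (z₁ : EReal) - P.G x (z₂ : EReal)|
          ≤ |P.G x (z₁ : EReal)| + |P.G x (z₂ : EReal)| := abs_sub _ _
      linarith)
    (fun x => by
      by_cases hx : z₁ < x ∧ x ≤ z₂
      · simp only [if_pos hx]; exact (hg x _).le
      · simp only [if_neg hx]; exact le_rfl)
    (P.Gdiff_eq z₁ z₂ h12) x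
  linarith


lemma G_rc (hg : ∀ x z, 0 < P.g x z) (x z : ℝ) {ε : ℝ} (hε : 0 < ε) :
    ∃ δ > 0, ∀ δ' : ℝ, 0 < δ' → δ' ≤ δ →
      P.G x (z : EReal) - P.G x ((z + δ' : ℝ) : EReal) ≤ ε := by
  set CF : ℝ := P.M / (1 - P.γ) with hCF
  set D : ℕ → ℝ → ℝ := fun k x' => P.G x' (z : EReal) - P.G x' ((z + 1/(k+1) : ℝ) : EReal)
    with hD
  have hstep : ∀ k : ℕ, (0:ℝ) < 1/(k+1) := fun k => by positivity
  have hle : ∀ k : ℕ, z ≤ z + 1/(k+1) := fun k => by linarith [hstep k]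
  have hDmeas : ∀ k, Measurable (D k) := fun k => (P.hG_meas _).sub (P.hG_meas _)
  have hDnonneg : ∀ k x', 0 ≤ D k x' := fun k x' =>
    sub_nonneg.mpr (P.G_antitone hg z (z + 1/(k+1)) (hle k) x')
  have hDbd : ∀ k x', |D k x'| ≤ 2 * CF * P.w x' := fun k x' => by
    have h1 := P.G_unif (z : EReal) x'
    have h2 := P.G_unif ((z + 1/(k+1) : ℝ) : EReal) x'
    have h3 : |D k x'| ≤ |P.G x' (z : EReal)| + |P.G x' ((z + 1/(k+1) : ℝ) : EReal)| :=
      abs_sub _ _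
    rw [hCF] at *
    linarith
  have hDanti : ∀ x', Antitone (fun k => D k x') := by
    intro x' k l hkl
    have h1 : (1:ℝ)/(l+1) ≤ 1/(k+1) := by
      apply one_div_le_one_div_of_le
      · positivity
      · exact_mod_cast Nat.succ_le_succ hkl
    have := P.G_antitone hg (z + 1/(l+1)) (z + 1/(k+1)) (by linarith) x'
    simp only [hD]
    linarith
  set u : ℝ → ℝ := fun x' => ⨅ k, D k x' with hu
  have hbdd : ∀ x', BddBelow (range fun k => D k x') :=
    fun x' => ⟨0, fun v ⟨k, hk⟩ => hk ▸ hDnonneg k x'⟩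
  have hDtend : ∀ x', Tendsto (fun k => D k x') atTop (𝓝 (u x')) :=
    fun x' => tendsto_atTop_ciInf (hDanti x') (hbdd x')
  have hum : Measurable u := Measurable.iInf hDmeas
  have hub : ∀ x', |u x'| ≤ 2 * CF * P.w x' := by
    intro x'
    have h1 : 0 ≤ u x' := le_ciInf (fun k => hDnonneg k x')
    have h2 : u x' ≤ D 0 x' := ciInf_le (hbdd x') 0
    have := hDbd 0 x'
    rw [abs_of_nonneg h1]
    rw [abs_of_nonneg (hDnonneg 0 x')] at this
    linarith
  have heq : ∀ x', u x' = 0 + P.β * ∫ y, u y ∂(P.κ (decide ((z : EReal) < (x' : EReal))) x') := by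
    intro x'
    have heqk : ∀ k : ℕ, D k x' =
        (if z < x' ∧ x' ≤ z + 1/(k+1) then P.g x' ((z + 1/(k+1) : ℝ) : EReal) else 0) +
          P.β * ∫ y, D k y ∂(P.κ (decide ((z : EReal) < (x' : EReal))) x') :=
      fun k => P.Gdiff_eq z (z + 1/(k+1)) (hle k) x'
    have hbtend : Tendsto (fun k : ℕ =>
        (if z < x' ∧ x' ≤ z + 1/(k+1) then P.g x' ((z + 1/(k+1) : ℝ) : EReal) else 0))
        atTop (𝓝 0) := by
      by_cases hx : z < x'
      · obtain ⟨K, hK⟩ := exists_nat_one_div_lt (sub_pos.mpr hx)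
        refine tendsto_const_nhds.congr' ?_
        filter_upwards [eventually_ge_atTop K] with k hk
        have h1 : (1:ℝ)/(k+1) ≤ 1/(K+1) := by
          apply one_div_le_one_div_of_le
          · positivity
          · exact_mod_cast Nat.succ_le_succ hk
        rw [if_neg]
        rintro ⟨-, hle'⟩
        have : (1:ℝ)/(K+1) < x' - z := hK
        linarith
      · refine tendsto_const_nhds.congr (fun k => ?_)
        rw [if_neg (fun hc => hx hc.1)]
    have hitend : Tendsto (fun k : ℕ =>
        ∫ y, D k y ∂(P.κ (decide ((z : EReal) < (x' : EReal))) x'))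
        atTop (𝓝 (∫ y, u y ∂(P.κ (decide ((z : EReal) < (x' : EReal))) x'))) := by
      refine tendsto_integral_of_dominated_convergence (fun y => 2 * CF * P.w y)
        (fun k => (hDmeas k).aestronglyMeasurable)
        ((P.hw_int _ x').const_mul _)
        (fun k => ae_of_all _ fun y => by rw [Real.norm_eq_abs]; exact hDbd k y)
        (ae_of_all _ fun y => hDtend y)
    exact tendsto_nhds_unique (hDtend x')
      (((hbtend.add (hitend.const_mul P.β))).congr (fun k => (heqk k).symm))
  have hu0 : ∀ x', u x' = 0 := by
    intro x'
    have h1 := P.fixpoint_nonneg u (fun _ => 0) (fun x' => decide ((z : EReal) < (x' : EReal)))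
      hum (2 * CF) hub (fun _ => le_refl 0) heq x'
    have h2 := P.fixpoint_nonneg (fun y => -u y) (fun _ => 0)
      (fun x' => decide ((z : EReal) < (x' : EReal)))
      hum.neg (2 * CF) (fun y => by rw [abs_neg]; exact hub y) (fun _ => le_refl 0)
      (fun y => by
        show -u y = 0 + P.β * ∫ y', -u y' ∂(P.κ (decide ((z : EReal) < (y : EReal))) y)
        rw [integral_neg]
        linarith [heq y]) x'
    linarith
  have := hDtend x
  rw [hu0 x] at this
  obtain ⟨K, hK⟩ := (eventually_atTop.mp (this.eventually_lt_const hε)) 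
  refine ⟨1/(K+1), hstep K, fun δ' hδ'0 hδ' => ?_⟩
  have hzδ : z + δ' ≤ z + 1/(K+1) := by linarith
  have := P.G_antitone hg (z + δ') (z + 1/(K+1)) hzδ x
  have hKK := hK K le_rfl
  simp only [hD] at hKK
  linarith


lemma F_unif (z : EReal) (x : ℝ) : |P.F x z| ≤ P.M / (1 - P.γ) * P.w x := by
  obtain ⟨C, hC⟩ := P.hF_bdd z
  exact P.fixpoint_bound (fun x => P.F x z) (fun x => P.r x (decide (z < (x : EReal))))
    (fun x => decide (z < (x : EReal))) (P.hF_meas z) C hC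
    (fun x => P.hr_bd x _) (fun x => P.hF_eq x z) x

/-- The Stieltjes function `t ↦ -G(x,t)`. -/
def sfG (hg : ∀ x z, 0 < P.g x z) (x : ℝ) : StieltjesFunction ℝ where
  toFun := fun t => -P.G x (t : EReal)
  mono' := fun s t hst => neg_le_neg (P.G_antitone hg s t hst x)
  right_continuous' := by
    intro t
    rw [ContinuousWithinAt, Metric.tendsto_nhdsWithin_nhds]
    intro ε hε
    obtain ⟨δ, hδ0, hδ⟩ := P.G_rc hg x t (half_pos hε)
    refine ⟨δ, hδ0, fun {s} hs hd => ?_⟩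
    rcases eq_or_lt_of_le (Set.mem_Ici.mp hs) with heq | hlt
    · simp [← heq, dist_self, hε]
    · have hδ' : s - t ≤ δ := by
        rw [Real.dist_eq, abs_of_nonneg (by linarith : (0:ℝ) ≤ s - t)] at hd
        linarith
      have hkey := hδ (s - t) (by linarith) hδ'
      have hts : t + (s - t) = s := by ring
      rw [hts] at hkey
      have hmono := P.G_antitone hg t s hlt.le x
      rw [Real.dist_eq]
      have : |-P.G x (s : EReal) - -P.G x (t : EReal)|
          = P.G x (t : EReal) - P.G x (s : EReal) := by
        rw [abs_of_nonneg (by linarith)]; ring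
      rw [this]; linarith

lemma sfG_LS (hg : ∀ x z, 0 < P.g x z) (x : ℝ) :
    IsLSMeasureOfAnti (fun z : ℝ => P.G x (z : EReal)) (P.sfG hg x).measure := by
  intro z₁ z₂ _
  rw [StieltjesFunction.measure_Ioc]
  congr 1
  show -P.G x (z₂ : EReal) - -P.G x (z₁ : EReal) = _
  ring

lemma key_x (hg : ∀ x z, 0 < P.g x z) (hmono : Monotone P.mStar)
    (hcont : Continuous P.mStar) (h3 : P.PCLI3) (x s t : ℝ) (hst : s < t) :
    P.mStar s * (P.G x (s : EReal) - P.G x (t : EReal))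
      ≤ P.F x (s : EReal) - P.F x (t : EReal) := by
  set νx := (P.sfG hg x).measure with hνx
  have hLS : IsLSMeasureOfAnti (fun z : ℝ => P.G x (z : EReal)) νx := P.sfG_LS hg x
  have h3' := h3 x νx hLS s t hst
  have hfin : νx (Ioc s t) < ⊤ := by
    rw [hLS s t hst.le]; exact ENNReal.ofReal_lt_top
  have hconst_int : ∀ c : ℝ, IntegrableOn (fun _ => c) (Ioc s t) νx := fun c =>
    integrableOn_const hfin.ne
  have hm_int : IntegrableOn P.mStar (Ioc s t) νx := by
    refine Integrable.mono' (hconst_int (max |P.mStar s| |P.mStar t|))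
      hcont.aestronglyMeasurable ?_
    rw [ae_restrict_iff' measurableSet_Ioc]
    refine ae_of_all _ fun z hz => ?_
    rw [Real.norm_eq_abs, abs_le]
    constructor
    · have := hmono hz.1.le
      have := neg_abs_le (P.mStar s)
      have : -|P.mStar s| ≤ P.mStar z := by linarith [neg_abs_le (P.mStar s), hmono hz.1.le]
      exact le_trans (neg_le_neg (le_max_left _ _)) this
    · exact le_trans (hmono hz.2) (le_trans (le_abs_self _) (le_max_right _ _))
  have hlb : ∫ z in Ioc s t, P.mStar s ∂νx ≤ ∫ z in Ioc s t, P.mStar z ∂νx :=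
    setIntegral_mono_on (hconst_int _) hm_int measurableSet_Ioc
      (fun z hz => hmono hz.1.le)
  rw [setIntegral_const, smul_eq_mul] at hlb
  have hval : (νx (Ioc s t)).toReal = P.G x (s : EReal) - P.G x (t : EReal) := by
    rw [hLS s t hst.le,
      ENNReal.toReal_ofReal (sub_nonneg.mpr (P.G_antitone hg s t hst.le x))]
  rw [measureReal_def, hval] at hlb
  linarith [h3', hlb, mul_comm (P.mStar s) (P.G x (s : EReal) - P.G x (t : EReal))]

section Plevel

variable (p : Measure ℝ)

lemma intF_p (hp : P.IsInitDist p) (z : EReal) : Integrable (fun x => P.F x z) p :=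
  P.int_of_bound hp.2 (P.hF_meas z) (P.F_unif z)

lemma intG_p (hp : P.IsInitDist p) (z : EReal) : Integrable (fun x => P.G x z) p :=
  P.int_of_bound hp.2 (P.hG_meas z) (P.G_unif z)

lemma Fp_bd (hp : P.IsInitDist p) (z : EReal) :
    |P.Fp p z| ≤ (P.M / (1 - P.γ)) * ∫ x, P.w x ∂p := by
  have h1 : |∫ x, P.F x z ∂p| ≤ ∫ x, |P.F x z| ∂p := by
    simpa [Real.norm_eq_abs] using norm_integral_le_integral_norm (μ := p) (fun x => P.F x z)
  have h2 : ∫ x, |P.F x z| ∂p ≤ ∫ x, (P.M / (1 - P.γ)) * P.w x ∂p :=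
    integral_mono (P.intF_p p hp z).abs (hp.2.const_mul _) (P.F_unif z)
  rw [integral_const_mul] at h2
  exact le_trans h1 h2

lemma Gp_bd (hp : P.IsInitDist p) (z : EReal) :
    |P.Gp p z| ≤ (P.M / (1 - P.γ)) * ∫ x, P.w x ∂p := by
  have h1 : |∫ x, P.G x z ∂p| ≤ ∫ x, |P.G x z| ∂p := by
    simpa [Real.norm_eq_abs] using norm_integral_le_integral_norm (μ := p) (fun x => P.G x z)
  have h2 : ∫ x, |P.G x z| ∂p ≤ ∫ x, (P.M / (1 - P.γ)) * P.w x ∂p :=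
    integral_mono (P.intG_p p hp z).abs (hp.2.const_mul _) (P.G_unif z)
  rw [integral_const_mul] at h2
  exact le_trans h1 h2

lemma Gp_anti (hp : P.IsInitDist p) (hg : ∀ x z, 0 < P.g x z) {s t : ℝ} (hst : s ≤ t) :
    P.Gp p (t : EReal) ≤ P.Gp p (s : EReal) :=
  integral_mono (P.intG_p p hp _) (P.intG_p p hp _) (fun x => P.G_antitone hg s t hst x)

lemma key_p (hp : P.IsInitDist p) (hg : ∀ x z, 0 < P.g x z) (hmono : Monotone P.mStar)
    (hcont : Continuous P.mStar) (h3 : P.PCLI3) {s t : ℝ} (hst : s < t) :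
    P.mStar s * (P.Gp p (s : EReal) - P.Gp p (t : EReal))
      ≤ P.Fp p (s : EReal) - P.Fp p (t : EReal) := by
  have hGs := P.intG_p p hp (s : EReal)
  have hGt := P.intG_p p hp (t : EReal)
  have hFs := P.intF_p p hp (s : EReal)
  have hFt := P.intF_p p hp (t : EReal)
  have h1 : ∫ x, (P.mStar s * (P.G x (s : EReal) - P.G x (t : EReal))) ∂p
      ≤ ∫ x, (P.F x (s : EReal) - P.F x (t : EReal)) ∂p :=
    integral_mono ((hGs.sub hGt).const_mul _) (hFs.sub hFt)
      (fun x => P.key_x hg hmono hcont h3 x s t hst)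
  rw [integral_const_mul, integral_sub hGs hGt, integral_sub hFs hFt] at h1
  exact h1

lemma nonnegX (hp : P.IsInitDist p) (hg : ∀ x z, 0 < P.g x z) (hmono : Monotone P.mStar)
    (hcont : Continuous P.mStar) (h3 : P.PCLI3) {L : ℝ} (hL0 : 0 ≤ L)
    (hLlb : ∀ z, -L ≤ P.mStar z) {s t : ℝ} (hst : s ≤ t) :
    0 ≤ (P.Fp p (s : EReal) - P.Fp p (t : EReal))
      + (1 + 2*L) * (P.Gp p (s : EReal) - P.Gp p (t : EReal)) := by
  rcases eq_or_lt_of_le hst with rfl | hlt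
  · simp
  · have hk := P.key_p p hp hg hmono hcont h3 hlt
    have hΔ : 0 ≤ P.Gp p (s : EReal) - P.Gp p (t : EReal) :=
      sub_nonneg.mpr (P.Gp_anti p hp hg hlt.le)
    have hms := hLlb s
    nlinarith

lemma si_bound (hp : P.IsInitDist p) (hg : ∀ x z, 0 < P.g x z) (hmono : Monotone P.mStar)
    (hcont : Continuous P.mStar) (h3 : P.PCLI3) {L : ℝ} (hL0 : 0 ≤ L)
    (hLlb : ∀ z, -L ≤ P.mStar z)
    (ν : Measure ℝ) (hν : IsLSMeasureOfAnti (fun z : ℝ => P.Gp p (z : EReal)) ν)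
    {s t : ℝ} (hst : s ≤ t) (hosc : P.mStar t ≤ P.mStar s + 1) :
    ∫⁻ z in Ioc s t, ENNReal.ofReal |P.mStar z| ∂ν ≤
      ENNReal.ofReal ((P.Fp p (s : EReal) - P.Fp p (t : EReal))
        + (1 + 2*L) * (P.Gp p (s : EReal) - P.Gp p (t : EReal))) := by
  rcases eq_or_lt_of_le hst with rfl | hlt
  · simp [Set.Ioc_self]
  · have hΔ : 0 ≤ P.Gp p (s : EReal) - P.Gp p (t : EReal) :=
      sub_nonneg.mpr (P.Gp_anti p hp hg hlt.le)
    have hm2L : 0 ≤ P.mStar t + 2*L := by linarith [hLlb t]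
    calc ∫⁻ z in Ioc s t, ENNReal.ofReal |P.mStar z| ∂ν
        ≤ ∫⁻ _z in Ioc s t, ENNReal.ofReal (P.mStar t + 2*L) ∂ν := by
          refine setLIntegral_mono' measurableSet_Ioc (fun z hz => ?_)
          refine ENNReal.ofReal_le_ofReal ?_
          have h1 := hmono hz.1.le
          have h2 := hmono hz.2
          have h3' := hLlb z
          rcases abs_cases (P.mStar z) with ⟨he, -⟩ | ⟨he, -⟩ <;> rw [he] <;> linarith
      _ = ENNReal.ofReal (P.mStar t + 2*L) * ν (Ioc s t) := setLIntegral_const _ _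
      _ = ENNReal.ofReal (P.mStar t + 2*L)
            * ENNReal.ofReal (P.Gp p (s : EReal) - P.Gp p (t : EReal)) := by
          rw [hν s t hlt.le]
      _ = ENNReal.ofReal ((P.mStar t + 2*L) * (P.Gp p (s : EReal) - P.Gp p (t : EReal))) :=
          (ENNReal.ofReal_mul hm2L).symm
      _ ≤ ENNReal.ofReal ((P.Fp p (s : EReal) - P.Fp p (t : EReal))
            + (1 + 2*L) * (P.Gp p (s : EReal) - P.Gp p (t : EReal))) := by
          refine ENNReal.ofReal_le_ofReal ?_
          have hk := P.key_p p hp hg hmono hcont h3 hlt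
          nlinarith

lemma ioc_bound (hp : P.IsInitDist p) (hg : ∀ x z, 0 < P.g x z) (hmono : Monotone P.mStar)
    (hcont : Continuous P.mStar) (h3 : P.PCLI3) {L : ℝ} (hL0 : 0 ≤ L)
    (hLlb : ∀ z, -L ≤ P.mStar z)
    (ν : Measure ℝ) (hν : IsLSMeasureOfAnti (fun z : ℝ => P.Gp p (z : EReal)) ν)
    (a b : ℝ) :
    ∫⁻ z in Ioc a b, ENNReal.ofReal |P.mStar z| ∂ν ≤
      ENNReal.ofReal (2 * ((P.M / (1 - P.γ)) * ∫ x, P.w x ∂p)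
        + (1 + 2*L) * (2 * ((P.M / (1 - P.γ)) * ∫ x, P.w x ∂p))) := by
  set W : ℝ := ∫ x, P.w x ∂p with hW
  set CF : ℝ := P.M / (1 - P.γ) with hCF
  by_cases hab : a < b
  swap
  · rw [Set.Ioc_eq_empty hab]
    simp
  · have hcomp : UniformContinuousOn P.mStar (Icc a b) :=
      isCompact_Icc.uniformContinuousOn_of_continuous hcont.continuousOn
    obtain ⟨δ, hδ0, hδ⟩ := Metric.uniformContinuousOn_iff.mp hcomp 1 one_pos
    set N : ℕ := ⌈(b - a)/δ⌉₊ + 1 with hN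
    have hN0 : (0:ℝ) < N := by positivity
    set step : ℝ := (b - a)/N with hstepdef
    have hstep0 : 0 < step := div_pos (by linarith) hN0
    have hstepδ : step < δ := by
      rw [hstepdef, div_lt_iff₀ hN0]
      have h1 : (b - a)/δ < (N:ℝ) := by
        refine lt_of_le_of_lt (Nat.le_ceil _) ?_
        exact_mod_cast Nat.lt_succ_self _
      rw [div_lt_iff₀ hδ0] at h1
      linarith
    set tt : ℕ → ℝ := fun k => a + k * step with htt
    have ht0 : tt 0 = a := by simp [htt]
    have htN : tt N = b := by
      rw [htt]; simp only; rw [hstepdef]; field_simp; ring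
    have htmem : ∀ k : ℕ, k ≤ N → tt k ∈ Icc a b := by
      intro k hk
      have hk' : (k:ℝ) ≤ N := Nat.cast_le.mpr hk
      have h1 : 0 ≤ (k:ℝ) * step := mul_nonneg (Nat.cast_nonneg k) hstep0.le
      have h2 : (k:ℝ) * step ≤ N * step := mul_le_mul_of_nonneg_right hk' hstep0.le
      have h3 : (N:ℝ) * step = b - a := by rw [hstepdef]; field_simp
      constructor
      · simp only [htt]; linarith
      · simp only [htt]; linarith
    have hmain : ∀ k : ℕ, k ≤ N → ∫⁻ z in Ioc a (tt k), ENNReal.ofReal |P.mStar z| ∂ν ≤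
        ENNReal.ofReal ((P.Fp p (a : EReal) - P.Fp p ((tt k : ℝ) : EReal))
          + (1 + 2*L) * (P.Gp p (a : EReal) - P.Gp p ((tt k : ℝ) : EReal))) := by
      intro k
      induction k with
      | zero =>
        intro _
        rw [ht0]
        simp [Set.Ioc_self]
      | succ k ih =>
        intro hk
        have hk' : k ≤ N := Nat.le_of_succ_le hk
        have hta : a ≤ tt k := (htmem k hk').1
        have htt' : tt k ≤ tt (k+1) := by
          simp only [htt]
          have : (k:ℝ) ≤ (k:ℝ) + 1 := by linarith
          push_cast
          nlinarith [hstep0]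
        have hosc : P.mStar (tt (k+1)) ≤ P.mStar (tt k) + 1 := by
          have hdist : dist (tt (k+1)) (tt k) < δ := by
            rw [Real.dist_eq]
            have hdiff : tt (k+1) - tt k = step := by
              simp only [htt]; push_cast; ring
            rw [hdiff, abs_of_pos hstep0]
            exact hstepδ
          have := hδ (tt (k+1)) (htmem _ hk) (tt k) (htmem _ hk') hdist
          rw [Real.dist_eq] at this
          have := (abs_lt.mp this).2
          linarith
        rw [← Set.Ioc_union_Ioc_eq_Ioc hta htt',
          lintegral_union measurableSet_Ioc (Set.Ioc_disjoint_Ioc_of_le le_rfl)]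
        refine le_trans (add_le_add (ih hk')
          (P.si_bound p hp hg hmono hcont h3 hL0 hLlb ν hν htt' hosc)) ?_
        rw [← ENNReal.ofReal_add
          (P.nonnegX p hp hg hmono hcont h3 hL0 hLlb hta)
          (P.nonnegX p hp hg hmono hcont h3 hL0 hLlb htt')]
        exact ENNReal.ofReal_le_ofReal (le_of_eq (by ring))
    have hfin := hmain N le_rfl
    rw [htN] at hfin
    refine le_trans hfin (ENNReal.ofReal_le_ofReal ?_)
    have hF1 := P.Fp_bd p hp (a : EReal)
    have hF2 := P.Fp_bd p hp (b : EReal)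
    have hG1 := P.Gp_bd p hp (a : EReal)
    have hG2 := P.Gp_bd p hp (b : EReal)
    rw [← hW, ← hCF] at hF1 hF2 hG1 hG2
    have h1 : P.Fp p (a : EReal) - P.Fp p (b : EReal) ≤ 2 * (CF * W) := by
      have := abs_le.mp hF1
      have := abs_le.mp hF2
      linarith [(abs_le.mp hF1).2, (abs_le.mp hF2).1]
    have h2 : P.Gp p (a : EReal) - P.Gp p (b : EReal) ≤ 2 * (CF * W) := by
      linarith [(abs_le.mp hG1).2, (abs_le.mp hG2).1]
    have h12L : 0 ≤ 1 + 2*L := by linarith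
    nlinarith

end Plevel

end Bandit

/-- Under PCL-indexability, the MP index `m*` is integrable with respect to the
Lebesgue–Stieltjes measure of `G(p,·)`. -/
theorem mpIndex_integrable (P : Bandit) (h : P.PCLIndexable)
    (p : Measure ℝ) (hp : P.IsInitDist p)
    (ν : Measure ℝ) (hν : IsLSMeasureOfAnti (fun z : ℝ => P.Gp p z) ν) :
    ∫⁻ z, ENNReal.ofReal |P.mStar z| ∂ν < ⊤ := by
  obtain ⟨hg, ⟨hmono, hcont, hbdd⟩, h3⟩ := h
  obtain ⟨lb, hlb⟩ := hbdd
  set L : ℝ := max (-lb) 0 with hL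
  have hL0 : 0 ≤ L := le_max_right _ _
  have hLlb : ∀ z, -L ≤ P.mStar z := by
    intro z
    have h1' : lb ≤ P.mStar z := hlb ⟨z, rfl⟩
    have h2' : -lb ≤ L := le_max_left _ _
    linarith
  set f : ℝ → ENNReal := fun z => ENNReal.ofReal |P.mStar z| with hf
  have hfm : Measurable f := (hcont.abs.measurable).ennreal_ofReal
  have hind : ∀ z, f z = ⨆ n : ℕ, (Ioc (-(n:ℝ)) (n:ℝ)).indicator f z := by
    intro z
    refine le_antisymm ?_ (iSup_le fun n => Set.indicator_le_self _ _ z)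
    have hn : z ∈ Ioc (-((⌊|z|⌋₊ + 1 : ℕ) : ℝ)) ((⌊|z|⌋₊ + 1 : ℕ) : ℝ) := by
      have h1' : |z| < ((⌊|z|⌋₊ + 1 : ℕ) : ℝ) := by
        push_cast
        exact Nat.lt_floor_add_one _
      constructor
      · have := neg_abs_le z
        linarith
      · linarith [le_abs_self z]
    exact le_iSup_of_le (⌊|z|⌋₊ + 1) (le_of_eq (Set.indicator_of_mem hn f).symm)
  have hmono' : Monotone fun n : ℕ => (Ioc (-(n:ℝ)) (n:ℝ)).indicator f := by
    intro n m hnm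
    refine Set.indicator_le_indicator_of_subset
      (Ioc_subset_Ioc (neg_le_neg (by exact_mod_cast hnm)) (by exact_mod_cast hnm))
      (fun _ => zero_le)
  have hsup : ∫⁻ z, f z ∂ν = ⨆ n : ℕ, ∫⁻ z in Ioc (-(n:ℝ)) (n:ℝ), f z ∂ν := by
    calc ∫⁻ z, f z ∂ν = ∫⁻ z, ⨆ n : ℕ, (Ioc (-(n:ℝ)) (n:ℝ)).indicator f z ∂ν :=
          lintegral_congr hind
      _ = ⨆ n : ℕ, ∫⁻ z, (Ioc (-(n:ℝ)) (n:ℝ)).indicator f z ∂ν :=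
          lintegral_iSup (fun n => hfm.indicator measurableSet_Ioc) hmono'
      _ = ⨆ n : ℕ, ∫⁻ z in Ioc (-(n:ℝ)) (n:ℝ), f z ∂ν := by
          refine iSup_congr fun n => ?_
          rw [lintegral_indicator measurableSet_Ioc]
  show ∫⁻ z, f z ∂ν < ⊤
  rw [hsup]
  refine lt_of_le_of_lt (iSup_le fun n =>
    P.ioc_bound p hp hg hmono hcont h3 hL0 hLlb ν hν (-(n:ℝ)) (n:ℝ)) ?_
  exact ENNReal.ofReal_lt_top
end
end
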